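/- Let j > 4/9 and set ξ = 1 - 1/√((9/4)j) and A = ((9/4)j)^{2/3}. Then ξ ∈ (0,1) and the function u(y) = A·max(y-ξ,0)^{4/3} satisfies u(0)=0, u(1)=1, u ≡ 0 on [0,ξ], u > 0 on (ξ,1], u'(ξ)=0, and -u''(y) + j/√(u(y)) = 0 for all y ∈ (ξ,1). -/

import Mathlib

open Real Set Filter Asymptotics

/-- Derivative of `A * (max (y-ξ) 0)^(4/3)` at `ξ` is `0`. -/
lemma aux_hasDerivAt_xi (A ξ : ℝ) (hA : 0 < A) :
    HasDerivAt (fun y => A * (max (y - ξ) 0) ^ ((4:ℝ)/3)) 0 ξ := by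
  rw [hasDerivAt_iff_isLittleO]
  have hzero : A * (max (ξ - ξ) 0) ^ ((4:ℝ)/3) = 0 := by
    norm_num [Real.zero_rpow (show ((4:ℝ)/3) ≠ 0 by norm_num)]
  rw [Asymptotics.isLittleO_iff]
  intro c hc
  have hδ : (0:ℝ) < (c / A) ^ (3:ℝ) := Real.rpow_pos_of_pos (div_pos hc hA) _
  filter_upwards [Metric.ball_mem_nhds ξ hδ] with y hy
  have hy' : |y - ξ| < (c / A) ^ (3:ℝ) := by
    simpa [Real.dist_eq] using hy
  simp only [smul_eq_mul, mul_zero, hzero, sub_zero, Real.norm_eq_abs]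
  rcases le_or_gt y ξ with h | h
  · have hm : max (y - ξ) 0 = 0 := max_eq_right (by linarith)
    rw [hm, Real.zero_rpow (by norm_num : ((4:ℝ)/3) ≠ 0), mul_zero, abs_zero]
    positivity
  · have ht : 0 < y - ξ := by linarith
    have hmax : max (y - ξ) 0 = y - ξ := max_eq_left ht.le
    have hsplit : (y - ξ) ^ ((4:ℝ)/3) = (y - ξ) ^ ((1:ℝ)/3) * (y - ξ) := by
      rw [show ((4:ℝ)/3) = (1:ℝ)/3 + 1 by norm_num, Real.rpow_add ht, Real.rpow_one]
    have hbound : (y - ξ) ^ ((1:ℝ)/3) ≤ c / A := by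
      have h1 : (y - ξ) ^ ((1:ℝ)/3) ≤ ((c / A) ^ (3:ℝ)) ^ ((1:ℝ)/3) := by
        apply Real.rpow_le_rpow ht.le _ (by norm_num)
        calc y - ξ ≤ |y - ξ| := le_abs_self _
          _ ≤ (c / A) ^ (3:ℝ) := hy'.le
      rwa [← Real.rpow_mul (le_of_lt (div_pos hc hA)), show (3:ℝ) * (1/3) = 1 by norm_num,
        Real.rpow_one] at h1
    have habs : |y - ξ| = y - ξ := abs_of_pos ht
    rw [hmax, hsplit, habs, abs_of_nonneg (by positivity)]
    calc A * ((y - ξ) ^ ((1:ℝ)/3) * (y - ξ))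
        ≤ A * (c / A * (y - ξ)) := by
          exact mul_le_mul_of_nonneg_left
            (mul_le_mul_of_nonneg_right hbound ht.le) hA.le
      _ = c * (y - ξ) := by field_simp

theorem stmt_1 (j : ℝ) (hj : 4/9 < j) :
    let ξ : ℝ := 1 - 1 / Real.sqrt ((9/4) * j)
    let A : ℝ := ((9/4) * j) ^ ((2:ℝ)/3)
    let u : ℝ → ℝ := fun y => A * (max (y - ξ) 0) ^ ((4:ℝ)/3)
    ξ ∈ Ioo (0:ℝ) 1 ∧ u 0 = 0 ∧ u 1 = 1 ∧
    (∀ y ∈ Icc (0:ℝ) ξ, u y = 0) ∧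
    (∀ y ∈ Ioc ξ 1, 0 < u y) ∧
    deriv u ξ = 0 ∧
    (∀ y ∈ Ioo ξ 1, -(deriv (deriv u) y) + j / Real.sqrt (u y) = 0) := by
  intro ξ A u
  set B : ℝ := (9/4) * j with hBdef
  have hB1 : (1:ℝ) < B := by rw [hBdef]; linarith
  have hB0 : (0:ℝ) < B := by linarith
  have hsB1 : 1 < Real.sqrt B := by
    rw [show (1:ℝ) = Real.sqrt 1 by simp]
    exact Real.sqrt_lt_sqrt (by norm_num) hB1
  have hsB0 : 0 < Real.sqrt B := lt_trans one_pos hsB1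
  have hξdef : ξ = 1 - 1 / Real.sqrt B := rfl
  have hξ0 : 0 < ξ := by
    rw [hξdef]
    have : 1 / Real.sqrt B < 1 := by rw [div_lt_one hsB0]; exact hsB1
    linarith
  have hξ1 : ξ < 1 := by
    rw [hξdef]
    have : 0 < 1 / Real.sqrt B := by positivity
    linarith
  have hA0 : 0 < A := Real.rpow_pos_of_pos hB0 _
  have hudef : ∀ y, u y = A * (max (y - ξ) 0) ^ ((4:ℝ)/3) := fun y => rfl
  have hu_zero : ∀ y ≤ ξ, u y = 0 := by
    intro y hy
    rw [hudef, max_eq_right (by linarith), Real.zero_rpow (by norm_num), mul_zero]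
  have hu_pos : ∀ y, ξ < y → u y = A * (y - ξ) ^ ((4:ℝ)/3) := by
    intro y hy
    rw [hudef, max_eq_left (by linarith)]
  -- u 1 = 1
  have h1ξ : (1:ℝ) - ξ = B ^ (-(1/2) : ℝ) := by
    rw [hξdef, Real.rpow_neg hB0.le, ← Real.sqrt_eq_rpow]
    ring
  have hu1 : u 1 = 1 := by
    rw [hu_pos 1 hξ1, h1ξ, ← Real.rpow_mul hB0.le]
    show B ^ ((2:ℝ)/3) * B ^ ((-(1/2) * (4/3)) : ℝ) = 1
    rw [← Real.rpow_add hB0]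
    norm_num
  refine ⟨⟨hξ0, hξ1⟩, ?_, hu1, ?_, ?_, ?_, ?_⟩
  · exact hu_zero 0 hξ0.le
  · intro y hy; exact hu_zero y hy.2
  · intro y hy
    rw [hu_pos y hy.1]
    have : 0 < y - ξ := by linarith [hy.1]
    positivity
  · exact (aux_hasDerivAt_xi A ξ hA0).deriv
  · -- the ODE on (ξ, 1)
    intro y hy
    have hty : 0 < y - ξ := by linarith [hy.1]
    -- first derivative on Ioi ξ
    have hw : ∀ z ∈ Ioi ξ, HasDerivAt u (A * (4/3) * (z - ξ) ^ ((1:ℝ)/3)) z := by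
      intro z hz
      have htz : 0 < z - ξ := by simpa [sub_pos] using hz
      have hv : HasDerivAt (fun x => A * (x - ξ) ^ ((4:ℝ)/3))
          (A * (1 * ((4:ℝ)/3) * (z - ξ) ^ ((4:ℝ)/3 - 1))) z :=
        (((hasDerivAt_id z).sub_const ξ).rpow_const (Or.inl htz.ne')).const_mul A
      have heq : u =ᶠ[nhds z] (fun x => A * (x - ξ) ^ ((4:ℝ)/3)) := by
        filter_upwards [Ioi_mem_nhds (show ξ < z from hz)] with x hx
        exact hu_pos x hx
      have h' := hv.congr_of_eventuallyEq heq
      refine h'.congr_deriv ?_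
      rw [show ((4:ℝ)/3 - 1) = (1:ℝ)/3 by norm_num]
      ring
    have hderiv1 : ∀ z ∈ Ioi ξ, deriv u z = A * (4/3) * (z - ξ) ^ ((1:ℝ)/3) := by
      intro z hz; exact (hw z hz).deriv
    -- second derivative at y
    have hderiv2 : deriv (deriv u) y = A * (4/3) * ((1:ℝ)/3) * (y - ξ) ^ (-(2:ℝ)/3) := by
      have hw2 : HasDerivAt (fun x => A * (4/3) * (x - ξ) ^ ((1:ℝ)/3))
          (A * (4/3) * (1 * ((1:ℝ)/3) * (y - ξ) ^ ((1:ℝ)/3 - 1))) y :=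
        (((hasDerivAt_id y).sub_const ξ).rpow_const (Or.inl hty.ne')).const_mul (A * (4/3))
      have heq : deriv u =ᶠ[nhds y] (fun x => A * (4/3) * (x - ξ) ^ ((1:ℝ)/3)) := by
        filter_upwards [Ioi_mem_nhds hy.1] with x hx
        exact hderiv1 x hx
      have h2' : HasDerivAt (deriv u)
          (A * (4/3) * (1 * ((1:ℝ)/3) * (y - ξ) ^ ((1:ℝ)/3 - 1))) y :=
        hw2.congr_of_eventuallyEq heq
      rw [h2'.deriv, show ((1:ℝ)/3 - 1) = -(2:ℝ)/3 by norm_num]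
      ring
    -- sqrt (u y)
    have hsu : Real.sqrt (u y) = B ^ ((1:ℝ)/3) * (y - ξ) ^ ((2:ℝ)/3) := by
      rw [hu_pos y hy.1]
      show Real.sqrt (B ^ ((2:ℝ)/3) * (y - ξ) ^ ((4:ℝ)/3)) = _
      rw [Real.sqrt_mul (by positivity), Real.sqrt_eq_rpow, Real.sqrt_eq_rpow,
        ← Real.rpow_mul hB0.le, ← Real.rpow_mul hty.le]
      norm_num
    rw [hderiv2, hsu]
    have hAB : A = B ^ ((2:ℝ)/3) := rfl
    rw [hAB]
    set T : ℝ := (y - ξ) ^ ((2:ℝ)/3) with hTdef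
    set P : ℝ := B ^ ((1:ℝ)/3) with hPdef
    set Q : ℝ := B ^ ((2:ℝ)/3) with hQdef
    have hT0 : 0 < T := Real.rpow_pos_of_pos hty _
    have hP0 : (0:ℝ) < P := Real.rpow_pos_of_pos hB0 _
    have hQ0 : (0:ℝ) < Q := Real.rpow_pos_of_pos hB0 _
    have hBpow : P * Q = B := by
      rw [hPdef, hQdef, ← Real.rpow_add hB0]; norm_num
    have hneg : (y - ξ) ^ (-(2:ℝ)/3) = T⁻¹ := by
      rw [show (-(2:ℝ)/3) = -((2:ℝ)/3) by norm_num, Real.rpow_neg hty.le, hTdef]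
    have hj' : j = (4/9) * B := by rw [hBdef]; ring
    have hkey : j / (P * T) = (4/9) * Q * T⁻¹ := by
      rw [hj', ← hBpow]
      field_simp
    rw [hneg, hkey]
    ring
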